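/- There exist ε₀ ∈ (0,1) and C > 0 such that for every ε ∈ (0,ε₀) and every real ξ with |ξ| ≥ 2/ε: |M₃(ξ) − sgn(ξ) · (1/ε) · √(1 − √3 i) / (√2 + (√2/2)(1 − √3 i))| ≤ C / (ε³ ξ²). -/

import Mathlib

noncomputable section
open Set

namespace Stmt17

/-- c_ε² = (1 − 2ε² + 2√(1 − ε² + ε⁴)) / (3ε²) -/
def cSq (ε : ℝ) : ℝ := (1 - 2*ε^2 + 2*Real.sqrt (1 - ε^2 + ε^4)) / (3*ε^2)

/-- d_ε² = (−1 + 2ε² + 2√(1 − ε² + ε⁴)) / (3ε²) -/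
def dSq (ε : ℝ) : ℝ := (-1 + 2*ε^2 + 2*Real.sqrt (1 - ε^2 + ε^4)) / (3*ε^2)

/-- for |ξ| > c_ε: D(ξ) = i·√(3ε⁴(ξ² − c_ε²)(ξ² + d_ε²)) -/
def Dbig (ε ξ : ℝ) : ℂ :=
  Complex.I * Complex.ofReal (Real.sqrt (3*ε^4*(ξ^2 - cSq ε)*(ξ^2 + dSq ε)))

/-- W(ξ) = 1 + ε²ξ² − D(ξ) -/
def Wfun (ε ξ : ℝ) : ℂ := Complex.ofReal (1 + ε^2*ξ^2) - Dbig ε ξ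

/-- M₃(ξ) = ξ³ √(W(ξ)) / ( √2 ε² ξ² (1+ξ²) + (√2/2)|ξ|√(1+ξ²) W(ξ) ),
with the principal complex square root. -/
def M3c (ε ξ : ℝ) : ℂ :=
  Complex.ofReal (ξ^3) * (Wfun ε ξ) ^ ((1:ℂ)/2) /
    (Complex.ofReal (Real.sqrt 2 * ε^2 * ξ^2 * (1 + ξ^2))
      + Complex.ofReal (Real.sqrt 2 / 2 * |ξ| * Real.sqrt (1 + ξ^2)) * Wfun ε ξ)

def _root_.Complex.abs : AbsoluteValue ℂ ℝ where
  toFun := fun z => ‖z‖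
  map_mul' := norm_mul
  nonneg' := norm_nonneg
  eq_zero' := fun _ => norm_eq_zero
  add_le' := norm_add_le

lemma _root_.Complex.norm_eq_abs (z : ℂ) : ‖z‖ = Complex.abs z := rfl

lemma _root_.Complex.abs_apply (z : ℂ) : Complex.abs z = Real.sqrt (Complex.normSq z) :=
  Complex.norm_def z

lemma _root_.Complex.sq_abs (z : ℂ) : Complex.abs z ^ 2 = Complex.normSq z := Complex.sq_norm z

lemma _root_.Complex.re_le_abs (z : ℂ) : z.re ≤ Complex.abs z := Complex.re_le_norm z

lemma _root_.Complex.abs_ofReal (r : ℝ) : Complex.abs (r : ℂ) = |r| := by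
  show ‖(r : ℂ)‖ = |r|; simp

lemma _root_.Complex.abs_I : Complex.abs Complex.I = 1 := by
  show ‖Complex.I‖ = 1; simp

lemma re_cpow_half_nonneg (z : ℂ) : 0 ≤ (z ^ ((1:ℂ)/2)).re := by
  rcases eq_or_ne z 0 with rfl | h
  · rw [Complex.zero_cpow (by norm_num)]; simp
  · rw [Complex.cpow_def_of_ne_zero h, Complex.exp_re]
    apply mul_nonneg (Real.exp_nonneg _)
    apply Real.cos_nonneg_of_mem_Icc
    have h1 := Complex.arg_le_pi z
    have h2 := Complex.neg_pi_lt_arg z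
    have him : (Complex.log z * ((1:ℂ)/2)).im = Complex.arg z / 2 := by
      simp [Complex.mul_im, Complex.log_im, Complex.log_re]; ring
    rw [him]
    constructor <;> [linarith; linarith]

lemma cpow_half_mul_self {z : ℂ} (h : z ≠ 0) :
    z ^ ((1:ℂ)/2) * z ^ ((1:ℂ)/2) = z := by
  rw [← Complex.cpow_add _ _ h]; norm_num

lemma keyP (ε ξ : ℝ) (hε : 0 < ε) :
    3*ε^4*(ξ^2 - cSq ε)*(ξ^2 + dSq ε) = 3*ε^4*ξ^4 + (4*ε^4 - 2*ε^2)*ξ^2 - 1 := by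
  unfold cSq dSq
  have hnn : (0:ℝ) ≤ 1 - ε^2 + ε^4 := by nlinarith [sq_nonneg (1 - ε^2), sq_nonneg ε]
  have hs : Real.sqrt (1 - ε^2 + ε^4) ^ 2 = 1 - ε^2 + ε^4 := Real.sq_sqrt hnn
  have hε2 : ε^2 ≠ 0 := by positivity
  field_simp
  nlinarith [hs]


private lemma aux_sqrt2_bounds : 1 ≤ Real.sqrt 2 ∧ Real.sqrt 2 ≤ 3/2 := by
  have s2 : Real.sqrt 2 ^ 2 = 2 := Real.sq_sqrt (by norm_num)
  have s2nn := Real.sqrt_nonneg 2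
  constructor <;> nlinarith

private lemma aux_sqrt3_bounds : 17/10 ≤ Real.sqrt 3 ∧ Real.sqrt 3 ≤ 2 := by
  have s3 : Real.sqrt 3 ^ 2 = 3 := Real.sq_sqrt (by norm_num)
  have s3nn := Real.sqrt_nonneg 3
  constructor <;> nlinarith

private lemma aux_Aclose (u c A : ℝ) (hu : 4 ≤ u) (hc : 0 ≤ c) (hc1 : c ≤ 1)
    (hA : 0 ≤ A) (h2 : A^2 = 3*u^2 + 4*c*u - 2*u - 1) :
    |A - Real.sqrt 3 * u| ≤ 5 := by
  obtain ⟨s3lb, s3ub⟩ := aux_sqrt3_bounds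
  have s3 : Real.sqrt 3 ^ 2 = 3 := Real.sq_sqrt (by norm_num)
  have hb2 : (Real.sqrt 3 * u)^2 = 3*u^2 := by rw [mul_pow, s3]
  have hbnn : 0 ≤ Real.sqrt 3 * u := by positivity
  have hcu1 : 0 ≤ c * u := by positivity
  have hcu2 : c * u ≤ u := by nlinarith
  rw [abs_le]
  constructor
  · nlinarith [sq_nonneg (A + Real.sqrt 3 * u), sq_nonneg (A - Real.sqrt 3 * u)]
  · nlinarith [sq_nonneg (A + Real.sqrt 3 * u), sq_nonneg (A - Real.sqrt 3 * u)]

private lemma aux_Ppos (u c : ℝ) (hu : 4 ≤ u) (hc : 0 ≤ c) :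
    0 < 3*u^2 + 4*c*u - 2*u - 1 := by nlinarith

private lemma aux_denlb (u x : ℝ) (hu : 0 ≤ u) (hx : 0 ≤ x) :
    u * x ≤ Real.sqrt 2 * u * (1 + x) := by
  obtain ⟨s2lb, s2ub⟩ := aux_sqrt2_bounds
  nlinarith [mul_le_mul_of_nonneg_right s2lb (mul_nonneg hu (by linarith : (0:ℝ) ≤ 1 + x))]

private lemma aux_d0lb (r : ℝ) (hr : 0 ≤ r) :
    r ≤ r * (Real.sqrt 2 + Real.sqrt 2 / 2) := by
  obtain ⟨s2lb, s2ub⟩ := aux_sqrt2_bounds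
  nlinarith

private lemma aux_d0ub : Real.sqrt 2 + Real.sqrt 2 / 2 * 2 ≤ 3 := by
  obtain ⟨s2lb, s2ub⟩ := aux_sqrt2_bounds
  nlinarith

private lemma aux_ddfin (u x : ℝ) (hu : 0 ≤ u) (hux : u ≤ x) :
    Real.sqrt 2 * u + Real.sqrt 2 / 2 * (1*(5*u) + x*6) ≤ 10*x := by
  obtain ⟨s2lb, s2ub⟩ := aux_sqrt2_bounds
  nlinarith [mul_le_mul_of_nonneg_right s2ub (by linarith : (0:ℝ) ≤ 7/2*u+3*x)]

private lemma aux_wabs (u A : ℝ) (hu : 4 ≤ u) (hA : 0 ≤ A)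
    (h : A ≤ Real.sqrt 3 * u + 5) : 1 + u + A ≤ 5 * u := by
  obtain ⟨s3lb, s3ub⟩ := aux_sqrt3_bounds
  nlinarith

private lemma aux_val1 (e X : ℝ) (he : 0 < e) (hX : 0 < X) :
    X^3 * (6/(e*X)) * (3*(X^2*(e^2*X^2))) = 18*e*X^6 := by
  field_simp
  ring

private lemma aux_final (e X : ℝ) (he : 0 < e) (hX2 : 0 < X^2) :
    (38*e*X^6) / (e^2*X^2*X^2 * (e^2*X^2*X^2)) ≤ 100 / (e^3*X^2) := by
  have hX2ne : (X^2 : ℝ) ≠ 0 := hX2.ne'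
  have heq : (38*e*X^6) / (e^2*X^2*X^2 * (e^2*X^2*X^2)) = 38 / (e^3*X^2) := by
    field_simp
  rw [heq]
  have hd : 0 < e^3*X^2 := mul_pos (pow_pos he 3) hX2
  exact (div_le_div_iff_of_pos_right hd).mpr (by norm_num)

set_option maxHeartbeats 16000000 in
theorem M3_asymptotics_at_infinity :
    ∃ ε₀ ∈ Ioo (0:ℝ) 1, ∃ C > (0:ℝ), ∀ ε ∈ Ioo (0:ℝ) ε₀, ∀ ξ : ℝ, 2/ε ≤ |ξ| →
      ‖M3c ε ξ -
          Complex.ofReal (Real.sign ξ) * Complex.ofReal (1/ε)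
            * ((1 - Complex.ofReal (Real.sqrt 3) * Complex.I) ^ ((1:ℂ)/2))
            / (Complex.ofReal (Real.sqrt 2)
                + Complex.ofReal (Real.sqrt 2 / 2)
                  * (1 - Complex.ofReal (Real.sqrt 3) * Complex.I))‖
        ≤ C / (ε^3 * ξ^2) := by
  refine ⟨1/2, by norm_num, 100, by norm_num, ?_⟩
  rintro ε ⟨hε0, hε1⟩ ξ hξ
  -- basic positivity facts
  have hε1' : ε < 1 := by linarith
  have hξpos : 0 < |ξ| := lt_of_lt_of_le (by positivity) hξ
  have hξ0 : ξ ≠ 0 := by simpa using hξpos.ne'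
  have hεξ : 2 ≤ ε * |ξ| := by
    rw [div_le_iff₀ hε0] at hξ; linarith [hξ]
  have hu4 : 4 ≤ ε^2 * ξ^2 := by
    have := sq_abs ξ
    nlinarith [hεξ]
  have hε2le : ε^2 ≤ 1 := by nlinarith
  have huξ : ε^2 * ξ^2 ≤ ξ^2 := by nlinarith [mul_le_mul_of_nonneg_right hε2le (sq_nonneg ξ)]
  -- numeric sqrt bounds
  have s2 : Real.sqrt 2 ^ 2 = 2 := Real.sq_sqrt (by norm_num)
  have s2nn := Real.sqrt_nonneg 2
  have s2lb : 1 ≤ Real.sqrt 2 := by nlinarith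
  have s2ub : Real.sqrt 2 ≤ 3/2 := by nlinarith
  have s3 : Real.sqrt 3 ^ 2 = 3 := Real.sq_sqrt (by norm_num)
  have s3nn := Real.sqrt_nonneg 3
  have s3lb : 17/10 ≤ Real.sqrt 3 := by nlinarith
  have s3ub : Real.sqrt 3 ≤ 2 := by nlinarith
  -- the polynomial under the square root
  set P : ℝ := 3*ε^4*ξ^4 + (4*ε^4 - 2*ε^2)*ξ^2 - 1 with hPdef
  have hPpos : 0 < P := by
    rw [hPdef, show 3*ε^4*ξ^4 + (4*ε^4-2*ε^2)*ξ^2 - 1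
      = 3*(ε^2*ξ^2)^2 + 4*ε^2*(ε^2*ξ^2) - 2*(ε^2*ξ^2) - 1 from by ring]
    exact aux_Ppos _ _ hu4 (sq_nonneg ε)
  set A : ℝ := Real.sqrt P with hAdef
  have hAnn : 0 ≤ A := Real.sqrt_nonneg _
  have hA2 : A^2 = P := Real.sq_sqrt hPpos.le
  have hDbig : Dbig ε ξ = Complex.I * Complex.ofReal A := by
    rw [Dbig, keyP ε ξ hε0]
  -- |A - √3 ε²ξ²| ≤ 5
  have hAclose : |A - Real.sqrt 3 * (ε^2*ξ^2)| ≤ 5 := by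
    have h2 : A^2 = 3*(ε^2*ξ^2)^2 + 4*ε^2*(ε^2*ξ^2) - 2*(ε^2*ξ^2) - 1 := by
      rw [hA2, hPdef]; ring
    exact aux_Aclose _ _ _ hu4 (sq_nonneg ε) hε2le hAnn h2
  -- complex abbreviations
  set w : ℂ := 1 - Complex.ofReal (Real.sqrt 3) * Complex.I with hwdef
  set s : ℂ := w ^ ((1:ℂ)/2) with hsdef
  have hw0 : w ≠ 0 := by
    intro h
    have : w.re = 1 := by simp [hwdef]
    rw [h] at this; simp at this
  have hss : s * s = w := cpow_half_mul_self hw0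
  have hwabsval : Complex.abs w = 2 := by
    have hn : Complex.normSq w = 4 := by
      simp [Complex.normSq_apply, hwdef]; nlinarith
    rw [Complex.abs_apply, hn, show (4:ℝ) = 2^2 by norm_num, Real.sqrt_sq (by norm_num)]
  have hsre : 1 ≤ s.re := by
    have h1 : s.re * s.re - s.im * s.im = 1 := by
      have := congrArg Complex.re hss
      simpa [Complex.mul_re, hwdef] using this
    have h2 : s.re^2 + s.im^2 = 2 := by
      have habs : Complex.abs s * Complex.abs s = Complex.abs w := by
        rw [← map_mul, hss]
      have := Complex.sq_abs s
      rw [Complex.normSq_apply] at this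
      nlinarith [habs, hwabsval]
    have h3 : 0 ≤ s.re := re_cpow_half_nonneg w
    nlinarith
  have hsabs : Complex.abs s ≤ 2 := by
    have habs : Complex.abs s * Complex.abs s = Complex.abs w := by
      rw [← map_mul, hss]
    nlinarith [Complex.abs.nonneg s, hwabsval]
  -- W facts
  have hWval : Wfun ε ξ = Complex.ofReal (1 + ε^2*ξ^2) - Complex.I * Complex.ofReal A := by
    rw [Wfun, hDbig]
  set W : ℂ := Wfun ε ξ with hWdef
  set W₀ : ℂ := Complex.ofReal (ε^2*ξ^2) * w with hW0def
  have hdiffW : W - W₀ = (1 : ℂ) - Complex.I * Complex.ofReal (A - Real.sqrt 3 * (ε^2*ξ^2)) := by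
    rw [hWval, hW0def, hwdef]; push_cast; ring
  have hWclose : Complex.abs (W - W₀) ≤ 6 := by
    rw [hdiffW, ← Complex.norm_eq_abs]
    refine (norm_sub_le _ _).trans ?_
    rw [norm_mul, Complex.norm_eq_abs (Complex.ofReal _), Complex.abs_ofReal]
    simp only [norm_one, Complex.norm_eq_abs, Complex.abs_I, one_mul]
    linarith [hAclose]
  have hWabs : Complex.abs W ≤ 5 * (ε^2*ξ^2) := by
    rw [hWval, ← Complex.norm_eq_abs]
    refine (norm_sub_le _ _).trans ?_
    rw [norm_mul, Complex.norm_eq_abs (Complex.ofReal (1+ε^2*ξ^2)),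
      Complex.norm_eq_abs (Complex.ofReal A), Complex.abs_ofReal, Complex.abs_ofReal]
    simp only [Complex.norm_eq_abs, Complex.abs_I, one_mul]
    have hA5 : A ≤ Real.sqrt 3 * (ε^2*ξ^2) + 5 := by
      have := abs_le.mp hAclose
      linarith [this.2]
    rw [abs_of_nonneg (by positivity : (0:ℝ) ≤ 1 + ε^2*ξ^2), abs_of_nonneg hAnn]
    have := aux_wabs (ε^2*ξ^2) A hu4 hAnn hA5
    linarith
  have hWre : W.re = 1 + ε^2*ξ^2 := by
    rw [hWval]
    simp only [Complex.sub_re, Complex.ofReal_re, Complex.mul_re, Complex.I_re,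
      Complex.I_im, Complex.ofReal_im, Complex.ofReal_re]
    ring
  have hW0ne : W ≠ 0 := by
    intro h
    rw [h] at hWre; simp at hWre
    nlinarith
  -- square roots
  set SW : ℂ := W ^ ((1:ℂ)/2) with hSWdef
  have hSWsq : SW * SW = W := cpow_half_mul_self hW0ne
  set S₀ : ℂ := Complex.ofReal (ε * |ξ|) * s with hS0def
  have hS0sq : S₀ * S₀ = W₀ := by
    rw [hS0def, hW0def]
    rw [mul_mul_mul_comm, ← Complex.ofReal_mul, hss]
    congr 2
    rw [← sq_abs ξ]; ring
  have hsum_re : ε * |ξ| ≤ (SW + S₀).re := by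
    have h1 : 0 ≤ SW.re := re_cpow_half_nonneg W
    have h2 : S₀.re = ε * |ξ| * s.re := by simp [hS0def]
    have : ε * |ξ| * 1 ≤ ε * |ξ| * s.re := by
      apply mul_le_mul_of_nonneg_left hsre (by positivity)
    simp [Complex.add_re, h2]
    nlinarith [h1]
  have hsumabs : ε * |ξ| ≤ Complex.abs (SW + S₀) :=
    le_trans hsum_re (Complex.re_le_abs _)
  have hsumne : SW + S₀ ≠ 0 := by
    intro h
    rw [h] at hsumabs; simp at hsumabs
    nlinarith [hξpos, hε0, mul_pos hε0 hξpos]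
  have hSWclose : Complex.abs (SW - S₀) ≤ 6 / (ε * |ξ|) := by
    have key : (SW - S₀) * (SW + S₀) = W - W₀ := by
      have : SW * SW - S₀ * S₀ = W - W₀ := by rw [hSWsq, hS0sq]
      linear_combination this
    have habs : Complex.abs (SW - S₀) * Complex.abs (SW + S₀) = Complex.abs (W - W₀) := by
      rw [← map_mul, key]
    have hpos : 0 < ε * |ξ| := mul_pos hε0 hξpos
    rw [le_div_iff₀ hpos]
    nlinarith [habs, hWclose, hsumabs, Complex.abs.nonneg (SW - S₀), Complex.abs.nonneg (SW + S₀)]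
  -- denominators
  set Den : ℂ := Complex.ofReal (Real.sqrt 2 * ε^2 * ξ^2 * (1 + ξ^2))
      + Complex.ofReal (Real.sqrt 2 / 2 * |ξ| * Real.sqrt (1 + ξ^2)) * W with hDendef
  set D₀ : ℂ := Complex.ofReal (ξ^2 * (ε^2*ξ^2)) *
      (Complex.ofReal (Real.sqrt 2) + Complex.ofReal (Real.sqrt 2 / 2) * w) with hD0def
  have hDenlb : ε^2*ξ^2 * ξ^2 ≤ Complex.abs Den := by
    have hDre : Den.re = Real.sqrt 2 * ε^2 * ξ^2 * (1+ξ^2)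
        + Real.sqrt 2 / 2 * |ξ| * Real.sqrt (1+ξ^2) * (1+ε^2*ξ^2) := by
      simp only [hDendef, Complex.add_re, Complex.mul_re, Complex.ofReal_re,
        Complex.ofReal_im, hWre]
      ring
    refine le_trans ?_ (Complex.re_le_abs Den)
    rw [hDre]
    have h2nd : 0 ≤ Real.sqrt 2 / 2 * |ξ| * Real.sqrt (1+ξ^2) * (1+ε^2*ξ^2) := by positivity
    have h1st := aux_denlb (ε^2*ξ^2) (ξ^2) (by positivity) (sq_nonneg ξ)
    linarith
  have hwre : w.re = 1 := by simp [hwdef]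
  have hwim : w.im = -Real.sqrt 3 := by simp [hwdef]
  have hD0lb : ε^2*ξ^2 * ξ^2 ≤ Complex.abs D₀ := by
    have hD0re : D₀.re = ξ^2 * (ε^2*ξ^2) * (Real.sqrt 2 + Real.sqrt 2 / 2) := by
      simp only [hD0def, Complex.mul_re, Complex.add_re, Complex.add_im,
        Complex.ofReal_re, Complex.ofReal_im, hwre, hwim]
      ring
    refine le_trans ?_ (Complex.re_le_abs D₀)
    rw [hD0re]
    have := aux_d0lb (ξ^2 * (ε^2*ξ^2)) (by positivity)
    linarith
  have hD0ub : Complex.abs D₀ ≤ 3 * (ξ^2 * (ε^2*ξ^2)) := by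
    have hB : Complex.abs (Complex.ofReal (Real.sqrt 2) + Complex.ofReal (Real.sqrt 2 / 2) * w) ≤ 3 := by
      refine le_trans (Complex.abs.add_le _ _) ?_
      rw [map_mul, Complex.abs_ofReal, Complex.abs_ofReal, hwabsval,
        abs_of_nonneg s2nn, abs_of_nonneg (by positivity : (0:ℝ) ≤ Real.sqrt 2 / 2)]
      exact aux_d0ub
    rw [hD0def, map_mul, Complex.abs_ofReal,
      abs_of_nonneg (by positivity : (0:ℝ) ≤ ξ^2 * (ε^2*ξ^2))]
    linarith [mul_le_mul_of_nonneg_left hB (by positivity : (0:ℝ) ≤ ξ^2 * (ε^2*ξ^2))]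
  have hDDclose : Complex.abs (D₀ - Den) ≤ 10 * ξ^2 := by
    set e : ℝ := |ξ| * Real.sqrt (1+ξ^2) - ξ^2 with hedef
    have hsq : |ξ| * Real.sqrt (1+ξ^2) = Real.sqrt (ξ^2 * (1+ξ^2)) := by
      rw [Real.sqrt_mul (sq_nonneg ξ), Real.sqrt_sq_eq_abs]
    have he0 : 0 ≤ e := by
      rw [hedef, hsq]
      have h1 : ξ^2 = Real.sqrt ((ξ^2)^2) := by rw [Real.sqrt_sq (sq_nonneg ξ)]
      nlinarith [Real.sqrt_le_sqrt (by nlinarith [sq_nonneg ξ] : (ξ^2)^2 ≤ ξ^2*(1+ξ^2)), h1]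
    have he1 : e ≤ 1 := by
      rw [hedef, hsq]
      have h1 : Real.sqrt (ξ^2*(1+ξ^2)) ≤ 1 + ξ^2 := by
        calc Real.sqrt (ξ^2*(1+ξ^2)) ≤ Real.sqrt ((1+ξ^2)^2) :=
              Real.sqrt_le_sqrt (by nlinarith [sq_nonneg ξ])
          _ = 1 + ξ^2 := Real.sqrt_sq (by positivity)
      linarith
    have hsplit : Den - D₀ = Complex.ofReal (Real.sqrt 2 * (ε^2*ξ^2))
        + Complex.ofReal (Real.sqrt 2 / 2) *
          (Complex.ofReal e * W + Complex.ofReal (ξ^2) * (W - W₀)) := by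
      rw [hDendef, hD0def, hW0def, hedef]
      push_cast
      ring
    rw [← AbsoluteValue.map_neg Complex.abs, neg_sub, hsplit]
    refine le_trans (Complex.abs.add_le _ _) ?_
    rw [map_mul, Complex.abs_ofReal, Complex.abs_ofReal,
      abs_of_nonneg (by positivity : (0:ℝ) ≤ Real.sqrt 2 * (ε^2*ξ^2)),
      abs_of_nonneg (by positivity : (0:ℝ) ≤ Real.sqrt 2 / 2)]
    have hin : Complex.abs (Complex.ofReal e * W + Complex.ofReal (ξ^2) * (W - W₀))
        ≤ 1 * (5*(ε^2*ξ^2)) + ξ^2 * 6 := by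
      refine le_trans (Complex.abs.add_le _ _) ?_
      rw [map_mul, map_mul, Complex.abs_ofReal, Complex.abs_ofReal,
        abs_of_nonneg he0, abs_of_nonneg (sq_nonneg ξ)]
      have t1 : e * Complex.abs W ≤ 1 * (5*(ε^2*ξ^2)) :=
        mul_le_mul he1 hWabs (Complex.abs.nonneg W) (by norm_num)
      have t2 : ξ^2 * Complex.abs (W - W₀) ≤ ξ^2 * 6 :=
        mul_le_mul_of_nonneg_left hWclose (sq_nonneg ξ)
      linarith
    refine le_trans (add_le_add (le_refl (Real.sqrt 2 * (ε^2*ξ^2)))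
      (mul_le_mul_of_nonneg_left hin (by positivity : (0:ℝ) ≤ Real.sqrt 2 / 2))) ?_
    exact aux_ddfin (ε^2*ξ^2) (ξ^2) (by positivity) huξ
  have hξ2 : 0 < ξ^2 := by rcases hξ0.lt_or_gt with h|h <;> nlinarith
  have huu : 0 < ε^2*ξ^2*ξ^2 := mul_pos (mul_pos (pow_pos hε0 2) hξ2) hξ2
  have hDenne : Den ≠ 0 := Complex.abs.pos_iff.mp (lt_of_lt_of_le huu hDenlb)
  have hD0ne : D₀ ≠ 0 := Complex.abs.pos_iff.mp (lt_of_lt_of_le huu hD0lb)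
  -- target equals N₀ / D₀
  have hBne : (Complex.ofReal (Real.sqrt 2) + Complex.ofReal (Real.sqrt 2 / 2) * w) ≠ 0 := by
    intro h
    have hre : (Complex.ofReal (Real.sqrt 2) + Complex.ofReal (Real.sqrt 2 / 2) * w).re
        = Real.sqrt 2 + Real.sqrt 2 / 2 := by
      simp only [Complex.add_re, Complex.mul_re, Complex.ofReal_re, Complex.ofReal_im,
        hwre, hwim]
      ring
    rw [h] at hre; simp at hre
    nlinarith
  have hεne : (ε:ℂ) ≠ 0 := Complex.ofReal_ne_zero.mpr hε0.ne'
  have hξne : (ξ:ℂ) ≠ 0 := Complex.ofReal_ne_zero.mpr hξ0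
  have hT : Complex.ofReal (Real.sign ξ) * Complex.ofReal (1/ε) * s /
      (Complex.ofReal (Real.sqrt 2) + Complex.ofReal (Real.sqrt 2 / 2) * w)
      = Complex.ofReal (ξ^3) * S₀ / D₀ := by
    rw [hS0def, hD0def]
    rcases hξ0.lt_or_gt with hneg | hpos
    · rw [Real.sign_of_neg hneg, abs_of_neg hneg]
      rw [div_eq_div_iff hBne (by rw [← hD0def]; exact hD0ne)]
      push_cast
      field_simp
    · rw [Real.sign_of_pos hpos, abs_of_pos hpos]
      rw [div_eq_div_iff hBne (by rw [← hD0def]; exact hD0ne)]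
      push_cast
      field_simp
  -- main decomposition
  have hM3 : M3c ε ξ = Complex.ofReal (ξ^3) * SW / Den := rfl
  have hdiff : M3c ε ξ - Complex.ofReal (Real.sign ξ) * Complex.ofReal (1/ε) * s /
      (Complex.ofReal (Real.sqrt 2) + Complex.ofReal (Real.sqrt 2 / 2) * w)
      = (Complex.ofReal (ξ^3) * (SW - S₀) * D₀
          + Complex.ofReal (ξ^3) * S₀ * (D₀ - Den)) / (Den * D₀) := by
    rw [hM3, hT, div_sub_div _ _ hDenne hD0ne]
    congr 1
    ring
  rw [hdiff, norm_div]
  have hn1 : ‖(Complex.ofReal (ξ^3) : ℂ)‖ = |ξ|^3 := by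
    rw [Complex.norm_eq_abs, Complex.abs_ofReal, abs_pow]
  have hSWn : ‖SW - S₀‖ ≤ 6/(ε*|ξ|) := by rw [Complex.norm_eq_abs]; exact hSWclose
  have hD0n : ‖D₀‖ ≤ 3*(ξ^2*(ε^2*ξ^2)) := by rw [Complex.norm_eq_abs]; exact hD0ub
  have hDDn : ‖D₀ - Den‖ ≤ 10*ξ^2 := by rw [Complex.norm_eq_abs]; exact hDDclose
  have hS0n : ‖S₀‖ ≤ 2*(ε*|ξ|) := by
    rw [hS0def, norm_mul, Complex.norm_eq_abs, Complex.norm_eq_abs, Complex.abs_ofReal,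
      abs_of_nonneg (by positivity : (0:ℝ) ≤ ε*|ξ|)]
    nlinarith [mul_le_mul_of_nonneg_left hsabs (by positivity : (0:ℝ) ≤ ε*|ξ|)]
  have hax : |ξ|^2 = ξ^2 := sq_abs ξ
  have hnum : ‖Complex.ofReal (ξ^3) * (SW - S₀) * D₀
      + Complex.ofReal (ξ^3) * S₀ * (D₀ - Den)‖ ≤ 38*ε*ξ^6 := by
    have hx6 : ξ^6 = |ξ|^6 := by
      rw [pow_abs, abs_of_nonneg (by positivity : (0:ℝ) ≤ ξ^6)]
    have hval1 : |ξ|^3 * (6/(ε*|ξ|)) * (3*(ξ^2*(ε^2*ξ^2))) = 18*ε*ξ^6 := by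
      rw [show ξ^2 = |ξ|^2 from (sq_abs ξ).symm, hx6]
      exact aux_val1 ε |ξ| hε0 hξpos
    have hval2 : |ξ|^3 * (2*(ε*|ξ|)) * (10*ξ^2) = 20*ε*ξ^6 := by
      rw [show ξ^2 = |ξ|^2 from (sq_abs ξ).symm, hx6]
      ring
    have e1 : ‖Complex.ofReal (ξ^3) * (SW - S₀) * D₀‖ ≤ 18*ε*ξ^6 := by
      rw [← hval1]
      refine (norm_mul_le _ _).trans ?_
      refine mul_le_mul ?_ hD0n (norm_nonneg _) (by positivity)
      refine (norm_mul_le _ _).trans ?_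
      rw [hn1]
      exact mul_le_mul_of_nonneg_left hSWn (by positivity)
    have e2 : ‖Complex.ofReal (ξ^3) * S₀ * (D₀ - Den)‖ ≤ 20*ε*ξ^6 := by
      rw [← hval2]
      refine (norm_mul_le _ _).trans ?_
      refine mul_le_mul ?_ hDDn (norm_nonneg _) (by positivity)
      refine (norm_mul_le _ _).trans ?_
      rw [hn1]
      exact mul_le_mul_of_nonneg_left hS0n (by positivity)
    refine (norm_add_le _ _).trans ?_
    linarith
  have hdennorm : ε^2*ξ^2*ξ^2 * (ε^2*ξ^2*ξ^2) ≤ ‖Den * D₀‖ := by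
    rw [norm_mul, Complex.norm_eq_abs, Complex.norm_eq_abs]
    exact mul_le_mul hDenlb hD0lb huu.le (Complex.abs.nonneg _)
  calc ‖Complex.ofReal (ξ^3) * (SW - S₀) * D₀ + Complex.ofReal (ξ^3) * S₀ * (D₀ - Den)‖
        / ‖Den * D₀‖
      ≤ (38*ε*ξ^6) / (ε^2*ξ^2*ξ^2 * (ε^2*ξ^2*ξ^2)) :=
        div_le_div₀ (by positivity) hnum (mul_pos huu huu) hdennorm
    _ ≤ 100 / (ε^3*ξ^2) := aux_final ε ξ hε0 hξ2

end Stmt17
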